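/- Let n be a positive integer and α, β ∈ ℂ. If there exist matrices p, q ∈ Mat_n(ℂ) satisfying the residue equations with pq ≠ qp, then the pair (α, β) belongs to the twelve-element set Σ₀ = {(1,−2), (0,0), (0,−1), (0,−2), (0,−3), (−1,0), (−1,−2), (−2,1), (−2,0), (−2,−1), (−2,−2), (−3,0)}. -/

import Mathlib

variable {n : ℕ}

private lemma lemI1 (α : ℂ) (p q : Matrix (Fin n) (Fin n) ℂ)
    (hp : -p ^ 2 + 2 * (p * q) + α • (p * q - q * p) + p = 0) :
    (2 + α) • (p * (p * q - q * p)) = α • ((p * q - q * p) * p) := by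
  have h : p * (-p ^ 2 + 2 * (p * q) + α • (p * q - q * p) + p)
      - (-p ^ 2 + 2 * (p * q) + α • (p * q - q * p) + p) * p = 0 := by
    rw [hp]; simp
  rw [← sub_eq_zero, ← h]
  simp only [pow_two, two_mul, mul_add, add_mul, mul_sub, sub_mul, mul_neg, neg_mul,
    mul_smul_comm, smul_mul_assoc, mul_assoc, smul_sub, smul_add]
  module

private lemma lemI3 (α : ℂ) (p q : Matrix (Fin n) (Fin n) ℂ)
    (hp : -p ^ 2 + 2 * (p * q) + α • (p * q - q * p) + p = 0) :
    p * (p * q - q * p) + (p * q - q * p) * p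
      = (2 + α) • ((p * q - q * p) * q) - α • (q * (p * q - q * p)) + (p * q - q * p) := by
  have h : q * (-p ^ 2 + 2 * (p * q) + α • (p * q - q * p) + p)
      - (-p ^ 2 + 2 * (p * q) + α • (p * q - q * p) + p) * q = 0 := by
    rw [hp]; simp
  rw [← sub_eq_zero, ← h]
  simp only [pow_two, two_mul, mul_add, add_mul, mul_sub, sub_mul, mul_neg, neg_mul,
    mul_smul_comm, smul_mul_assoc, mul_assoc, smul_sub, smul_add]
  module

private lemma lemI2 (β : ℂ) (p q : Matrix (Fin n) (Fin n) ℂ)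
    (hq : -q ^ 2 + 2 * (q * p) + β • (q * p - p * q) + q = 0) :
    (2 + β) • (q * (p * q - q * p)) = β • ((p * q - q * p) * q) := by
  have h : (-q ^ 2 + 2 * (q * p) + β • (q * p - p * q) + q) * q
      - q * (-q ^ 2 + 2 * (q * p) + β • (q * p - p * q) + q) = 0 := by
    rw [hq]; simp
  rw [← sub_eq_zero, ← h]
  simp only [pow_two, two_mul, mul_add, add_mul, mul_sub, sub_mul, mul_neg, neg_mul,
    mul_smul_comm, smul_mul_assoc, mul_assoc, smul_sub, smul_add]
  module

private lemma lemI4 (β : ℂ) (p q : Matrix (Fin n) (Fin n) ℂ)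
    (hq : -q ^ 2 + 2 * (q * p) + β • (q * p - p * q) + q = 0) :
    q * (p * q - q * p) + (p * q - q * p) * q
      = (2 + β) • ((p * q - q * p) * p) - β • (p * (p * q - q * p)) + (p * q - q * p) := by
  have h : (-q ^ 2 + 2 * (q * p) + β • (q * p - p * q) + q) * p
      - p * (-q ^ 2 + 2 * (q * p) + β • (q * p - p * q) + q) = 0 := by
    rw [hq]; simp
  rw [← sub_eq_zero, ← h]
  simp only [pow_two, two_mul, mul_add, add_mul, mul_sub, sub_mul, mul_neg, neg_mul,
    mul_smul_comm, smul_mul_assoc, mul_assoc, smul_sub, smul_add]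
  module

private lemma keyB (β : ℂ) (p q : Matrix (Fin n) (Fin n) ℂ)
    (hp0 : -p ^ 2 + 2 * (p * q) + p = 0)
    (hq : -q ^ 2 + 2 * (q * p) + β • (q * p - p * q) + q = 0)
    (hnc : p * q ≠ q * p) :
    β = 0 ∨ β = -1 ∨ β = -2 ∨ β = -3 := by
  have hp : -p ^ 2 + 2 * (p * q) + (0:ℂ) • (p * q - q * p) + p = 0 := by
    simp only [zero_smul, add_zero]; exact hp0
  set c := p * q - q * p with hcdef
  have hc : c ≠ 0 := sub_ne_zero.mpr hnc
  have h1 := lemI1 0 p q hp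
  have h2 := lemI2 β p q hq
  have h3 := lemI3 0 p q hp
  have h4 := lemI4 β p q hq
  rw [← hcdef] at h1 h2 h3 h4
  simp only [add_zero, zero_smul, sub_zero] at h1 h3
  -- h1 : (2:ℂ) • (p * c) = 0,  h3 : p * c + c * p = (2:ℂ) • (c * q) + c
  have hpc : p * c = 0 := by
    rcases smul_eq_zero.mp h1 with h | h
    · exact absurd h two_ne_zero
    · exact h
  have hcp : c * p = (2:ℂ) • (c * q) + c := by
    rw [hpc, zero_add] at h3; exact h3
  have hqc : q * c = (2*β+3) • (c*q) + (β+3) • c := by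
    linear_combination (norm := module) h4 + (2+β) • hcp - β • hpc
  have hkey : (2*(β^2+3*β+3)) • (c*q) = (-((β+2)*(β+3))) • c := by
    linear_combination (norm := module) h2 - (2+β) • hqc
  by_cases hk : β^2+3*β+3 = 0
  · rw [hk, mul_zero, zero_smul] at hkey
    rcases smul_eq_zero.mp hkey.symm with h | h
    · rcases mul_eq_zero.mp (neg_eq_zero.mp h) with h | h
      · exact Or.inr (Or.inr (Or.inl (by linear_combination h)))
      · exact Or.inr (Or.inr (Or.inr (by linear_combination h)))
    · exact absurd h hc
  · have h2k : (2*(β^2+3*β+3)) ≠ 0 := mul_ne_zero two_ne_zero hk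
    obtain ⟨ρ, hρdef⟩ : ∃ ρ : ℂ, ρ = (-((β+2)*(β+3)))/(2*(β^2+3*β+3)) := ⟨_, rfl⟩
    have hcq : c * q = ρ • c := by
      have h' : (2*(β^2+3*β+3)) • (c * q) = (2*(β^2+3*β+3)) • (ρ • c) := by
        rw [hkey, smul_smul]
        congr 1
        rw [hρdef]
        rw [mul_div_cancel₀ _ h2k]
      exact smul_right_injective _ h2k h'
    have hcp' : c * p = (2*ρ+1) • c := by
      rw [hcq] at hcp
      linear_combination (norm := module) hcp
    have E : c * (-q ^ 2 + 2 * (q * p) + β • (q * p - p * q) + q) = 0 := by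
      rw [hq, mul_zero]
    simp only [pow_two, two_mul, mul_add, mul_sub, mul_neg, mul_smul_comm,
      ← mul_assoc, smul_mul_assoc] at E
    rw [hcq] at E
    simp only [add_mul, smul_mul_assoc, hcp', hcq, smul_smul, smul_add, smul_sub] at E
    have hscal : (3*(ρ*ρ) + 3*ρ) • c = 0 := by
      linear_combination (norm := module) E
    have hρ2 : ρ = 0 ∨ ρ + 1 = 0 := by
      rcases smul_eq_zero.mp hscal with h | h
      · have h3 : (3:ℂ) ≠ 0 := by norm_num
        have : (3:ℂ) * (ρ * (ρ+1)) = 0 := by linear_combination h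
        rcases mul_eq_zero.mp this with h' | h'
        · exact absurd h' h3
        · exact mul_eq_zero.mp h'
      · exact absurd h hc
    rcases hρ2 with h | h
    · rw [hρdef, div_eq_zero_iff] at h
      rcases h with h | h
      · rcases mul_eq_zero.mp (neg_eq_zero.mp h) with h | h
        · exact Or.inr (Or.inr (Or.inl (by linear_combination h)))
        · exact Or.inr (Or.inr (Or.inr (by linear_combination h)))
      · exact absurd h h2k
    · have hβ : β^2 + β = 0 := by
        rw [hρdef] at h
        rw [div_add_one h2k, div_eq_zero_iff] at h
        rcases h with h | h
        · linear_combination h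
        · exact absurd h h2k
      rcases mul_eq_zero.mp (show β * (β+1) = 0 by linear_combination hβ) with h | h
      · exact Or.inl h
      · exact Or.inr (Or.inl (by linear_combination h))

private lemma keyA (α β : ℂ) (p q : Matrix (Fin n) (Fin n) ℂ)
    (hp : -p ^ 2 + 2 * (p * q) + α • (p * q - q * p) + p = 0)
    (hq : -q ^ 2 + 2 * (q * p) + β • (q * p - p * q) + q = 0)
    (hnc : p * q ≠ q * p) :
    α = 0 ∨ α = -2 ∨ β = 0 ∨ β = -2 := by
  by_contra hcon
  push_neg at hcon
  obtain ⟨ha0, ha2, hb0, hb2⟩ := hcon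
  have ha2' : 2 + α ≠ 0 := fun h => ha2 (by linear_combination h)
  have hb2' : 2 + β ≠ 0 := fun h => hb2 (by linear_combination h)
  set c := p * q - q * p with hcdef
  have hc : c ≠ 0 := sub_ne_zero.mpr hnc
  have h1 := lemI1 α p q hp
  have h2 := lemI2 β p q hq
  have h3 := lemI3 α p q hp
  have h4 := lemI4 β p q hq
  rw [← hcdef] at h1 h2 h3 h4
  -- hA : 2β(1+α) • pc = 2α(2+α+β) • qc + (αβ) • c
  have hA : (2*β*(1+α)) • (p*c) = (2*α*(2+α+β)) • (q*c) + (α*β) • c := by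
    linear_combination (norm := module) (α*β) • h3 + β • h1 - (α*(2+α)) • h2
  have hB : (2*α*(1+β)) • (q*c) = (2*β*(2+α+β)) • (p*c) + (α*β) • c := by
    linear_combination (norm := module) (α*β) • h4 + α • h2 - (β*(2+β)) • h1
  obtain ⟨D, hDdef⟩ : ∃ D : ℂ, D = (1+α)*(1+β) - (2+α+β)^2 := ⟨_, rfl⟩
  have hU : (4*α*β*D) • (p*c) = (2*α^2*β*(3+α+2*β)) • c := by
    rw [hDdef]
    linear_combination (norm := module) (2*α*(1+β)) • hA + (2*α*(2+α+β)) • hB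
  have hW : (4*α*β*D) • (q*c) = (2*α*β^2*(3+β+2*α)) • c := by
    rw [hDdef]
    linear_combination (norm := module) (2*β*(1+α)) • hB + (2*β*(2+α+β)) • hA
  -- helper to extract scalar equations
  have extract : ∀ x : ℂ, x • c = 0 → x = 0 := by
    intro x hx
    rcases smul_eq_zero.mp hx with h | h
    · exact h
    · exact absurd h hc
  by_cases hD : D = 0
  · -- degenerate case : forces α = β = -1 and then c = 0
    rw [hD] at hU hW
    simp only [mul_zero, zero_smul] at hU hW
    have e1 : (2*α^2*β*(3+α+2*β)) = 0 := extract _ hU.symm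
    have e2 : (2*α*β^2*(3+β+2*α)) = 0 := extract _ hW.symm
    have f1 : 3+α+2*β = 0 := by
      rcases mul_eq_zero.mp e1 with h | h
      · rcases mul_eq_zero.mp h with h' | h'
        · rcases mul_eq_zero.mp h' with h'' | h''
          · exact absurd h'' two_ne_zero
          · exact absurd (pow_eq_zero_iff two_ne_zero |>.mp h'') ha0
        · exact absurd h' hb0
      · exact h
    have f2 : 3+β+2*α = 0 := by
      rcases mul_eq_zero.mp e2 with h | h
      · rcases mul_eq_zero.mp h with h' | h'
        · rcases mul_eq_zero.mp h' with h'' | h''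
          · exact absurd h'' two_ne_zero
          · exact absurd h'' ha0
        · exact absurd (pow_eq_zero_iff two_ne_zero |>.mp h') hb0
      · exact h
    have hαm1 : α = -1 := by linear_combination (2*f2 - f1)/3
    have hβm1 : β = -1 := by linear_combination (2*f1 - f2)/3
    rw [hαm1, hβm1] at hA
    norm_num at hA
    exact hc hA.symm
  · -- nondegenerate : eigenvalue relations
    have h4D : (4*α*β*D) ≠ 0 := by
      apply mul_ne_zero (mul_ne_zero (mul_ne_zero (by norm_num) ha0) hb0) hD
    obtain ⟨lam, hlam⟩ : ∃ l : ℂ, l = (2*α^2*β*(3+α+2*β))/(4*α*β*D) := ⟨_, rfl⟩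
    obtain ⟨nu, hnu⟩ : ∃ l : ℂ, l = (2*α*β^2*(3+β+2*α))/(4*α*β*D) := ⟨_, rfl⟩
    have hpc : p * c = lam • c := by
      have h' : (4*α*β*D) • (p*c) = (4*α*β*D) • (lam • c) := by
        rw [hU, smul_smul]
        congr 1
        rw [hlam]
        field_simp
      exact smul_right_injective _ h4D h'
    have hqc : q * c = nu • c := by
      have h' : (4*α*β*D) • (q*c) = (4*α*β*D) • (nu • c) := by
        rw [hW, smul_smul]
        congr 1
        rw [hnu]
        field_simp
      exact smul_right_injective _ h4D h'
    -- c * p and c * q eigen-relations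
    obtain ⟨mu, hmu⟩ : ∃ l : ℂ, l = (2+α)*lam/α := ⟨_, rfl⟩
    obtain ⟨rho, hrho⟩ : ∃ l : ℂ, l = (2+β)*nu/β := ⟨_, rfl⟩
    have hcp : c * p = mu • c := by
      have h' : α • (c * p) = α • (mu • c) := by
        rw [← h1, hpc, smul_smul, smul_smul]
        congr 1
        rw [hmu]
        field_simp
      exact smul_right_injective _ ha0 h'
    have hcq : c * q = rho • c := by
      have h' : β • (c * q) = β • (rho • c) := by
        rw [← h2, hqc, smul_smul, smul_smul]
        congr 1
        rw [hrho]
        field_simp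
      exact smul_right_injective _ hb0 h'
    -- quadratic relations Q1, Q3 from hp * c and hq * c
    have E1 : (-p ^ 2 + 2 * (p * q) + α • (p * q - q * p) + p) * c = 0 := by
      rw [hp, zero_mul]
    simp only [pow_two, two_mul, add_mul, sub_mul, neg_mul, smul_mul_assoc,
      mul_assoc] at E1
    rw [hpc] at E1
    simp only [mul_smul_comm, hpc, hqc, smul_smul, smul_add, smul_sub] at E1
    have hQ1 : -(lam*lam) + 2*(nu*lam) + lam = 0 := by
      apply extract
      linear_combination (norm := module) E1
    have E3 : (-q ^ 2 + 2 * (q * p) + β • (q * p - p * q) + q) * c = 0 := by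
      rw [hq, zero_mul]
    simp only [pow_two, two_mul, add_mul, sub_mul, neg_mul, smul_mul_assoc,
      mul_assoc] at E3
    rw [hqc] at E3
    simp only [mul_smul_comm, hpc, hqc, smul_smul, smul_add, smul_sub] at E3
    have hQ3 : -(nu*nu) + 2*(lam*nu) + nu = 0 := by
      apply extract
      linear_combination (norm := module) E3
    -- quadratic relations Q2, Q4 from c * hp and c * hq
    have E2 : c * (-p ^ 2 + 2 * (p * q) + α • (p * q - q * p) + p) = 0 := by
      rw [hp, mul_zero]
    simp only [pow_two, two_mul, mul_add, mul_sub, mul_neg, mul_smul_comm,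
      ← mul_assoc] at E2
    rw [hcp] at E2
    simp only [add_mul, smul_mul_assoc, hcp, hcq, smul_smul, smul_add, smul_sub] at E2
    have hQ2 : -(mu*mu) + 2*(rho*mu) + mu = 0 := by
      apply extract
      linear_combination (norm := module) E2
    have E4 : c * (-q ^ 2 + 2 * (q * p) + β • (q * p - p * q) + q) = 0 := by
      rw [hq, mul_zero]
    simp only [pow_two, two_mul, mul_add, mul_sub, mul_neg, mul_smul_comm,
      ← mul_assoc] at E4
    rw [hcq] at E4
    simp only [add_mul, smul_mul_assoc, hcp, hcq, smul_smul, smul_add, smul_sub] at E4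
    have hQ4 : -(rho*rho) + 2*(mu*rho) + rho = 0 := by
      apply extract
      linear_combination (norm := module) E4
    -- case analysis
    rw [hpc, hqc] at hA hB
    by_cases hl : lam = 0
    · by_cases hn : nu = 0
      · -- hA gives αβ • c = 0
        rw [hl, hn] at hA
        simp only [smul_smul, smul_zero, mul_zero, zero_smul, zero_add] at hA
        have : α*β = 0 := extract _ hA.symm
        rcases mul_eq_zero.mp this with h | h
        · exact ha0 h
        · exact hb0 h
      · -- nu = 2 lam + 1 = 1
        have hn1 : nu = 1 := by
          have : nu * (1 + 2*lam - nu) = 0 := by linear_combination hQ3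
          rcases mul_eq_zero.mp this with h | h
          · exact absurd h hn
          · rw [hl] at h; linear_combination -h
        rw [hl, hn1] at hB
        simp only [smul_smul, smul_zero, mul_zero, zero_smul, zero_add, add_zero, mul_one] at hB
        have : (2*α*(1+β)) - α*β = 0 := by
          apply extract
          linear_combination (norm := module) hB
        have hb : β = -2 := by
          have h' : α * (2 + β) = 0 := by linear_combination this
          rcases mul_eq_zero.mp h' with h | h
          · exact absurd h ha0
          · linear_combination h
        exact hb2 hb
    · have hl1 : lam = 2*nu + 1 := by
        have : lam * (1 + 2*nu - lam) = 0 := by linear_combination hQ1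
        rcases mul_eq_zero.mp this with h | h
        · exact absurd h hl
        · linear_combination -h
      by_cases hn : nu = 0
      · have hl2 : lam = 1 := by rw [hn] at hl1; linear_combination hl1
        rw [hl2, hn] at hA
        simp only [smul_smul, smul_zero, mul_zero, zero_smul, zero_add, add_zero, mul_one] at hA
        have : (2*β*(1+α)) - α*β = 0 := by
          apply extract
          linear_combination (norm := module) hA
        have ha : α = -2 := by
          have h' : β * (2 + α) = 0 := by linear_combination this
          rcases mul_eq_zero.mp h' with h | h
          · exact absurd h hb0
          · linear_combination h
        exact ha2 ha
      · -- lam = 2nu+1, nu = 2lam+1 → mu = rho = -1 → contradiction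
        have hn1 : nu = 2*lam + 1 := by
          have : nu * (1 + 2*lam - nu) = 0 := by linear_combination hQ3
          rcases mul_eq_zero.mp this with h | h
          · exact absurd h hn
          · linear_combination -h
        have hmune : mu ≠ 0 := by
          rw [hmu]
          apply div_ne_zero (mul_ne_zero ha2' hl) ha0
        have hrhone : rho ≠ 0 := by
          rw [hrho]
          apply div_ne_zero (mul_ne_zero hb2' hn) hb0
        have hmu1 : mu = 2*rho + 1 := by
          have : mu * (1 + 2*rho - mu) = 0 := by linear_combination hQ2
          rcases mul_eq_zero.mp this with h | h
          · exact absurd h hmune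
          · linear_combination -h
        have hrho1 : rho = 2*mu + 1 := by
          have : rho * (1 + 2*mu - rho) = 0 := by linear_combination hQ4
          rcases mul_eq_zero.mp this with h | h
          · exact absurd h hrhone
          · linear_combination -h
        have hmum1 : mu = -1 := by linear_combination (-hmu1 - 2*hrho1)/3
        have hlamm1 : lam = -1 := by linear_combination (-hl1 - 2*hn1)/3
        -- mu = (2+α)lam/α = -1 with lam = -1 → -(2+α) = -α → 2 = 0
        have : (2:ℂ) = 0 := by
          have h' : mu * α = (2+α)*lam := by
            rw [hmu]
            field_simp
          rw [hmum1, hlamm1] at h'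
          linear_combination h'
        norm_num at this

private lemma lemT (α : ℂ) (p q : Matrix (Fin n) (Fin n) ℂ)
    (hp : -p ^ 2 + 2 * (p * q) + α • (p * q - q * p) + p = 0) :
    -p.transpose ^ 2 + 2 * (p.transpose * q.transpose)
      + (-2-α) • (p.transpose * q.transpose - q.transpose * p.transpose) + p.transpose = 0 := by
  have hp' : -p ^ 2 + (p * q + p * q) + α • (p * q - q * p) + p = 0 := by
    rw [← two_mul]; exact hp
  have h := congrArg Matrix.transpose hp'
  simp only [Matrix.transpose_add, Matrix.transpose_neg, Matrix.transpose_smul,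
    Matrix.transpose_sub, Matrix.transpose_mul, Matrix.transpose_pow,
    Matrix.transpose_zero] at h
  rw [← h]
  simp only [two_mul]
  module

private lemma trans_ne (p q : Matrix (Fin n) (Fin n) ℂ) (hnc : p * q ≠ q * p) :
    p.transpose * q.transpose ≠ q.transpose * p.transpose := by
  intro h
  apply hnc
  have := congrArg Matrix.transpose h
  simpa [Matrix.transpose_mul] using this.symm

theorem noncommuting_residues_imply_Sigma0 (n : ℕ) (hn : 0 < n) (α β : ℂ)
    (p q : Matrix (Fin n) (Fin n) ℂ)
    (hp : -p ^ 2 + 2 * (p * q) + α • (p * q - q * p) + p = 0)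
    (hq : -q ^ 2 + 2 * (q * p) + β • (q * p - p * q) + q = 0)
    (hnc : p * q ≠ q * p) :
    (α, β) ∈ ({(1, -2), (0, 0), (0, -1), (0, -2), (0, -3), (-1, 0), (-1, -2),
      (-2, 1), (-2, 0), (-2, -1), (-2, -2), (-3, 0)} : Set (ℂ × ℂ)) := by
  have hnc' : q * p ≠ p * q := fun h => hnc h.symm
  rcases keyA α β p q hp hq hnc with hα | hα | hβ | hβ
  · -- α = 0
    subst hα
    have hp0 : -p ^ 2 + 2 * (p * q) + p = 0 := by
      simpa using hp
    rcases keyB β p q hp0 hq hnc with h | h | h | h <;> subst h <;>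
      simp only [Set.mem_insert_iff, Set.mem_singleton_iff, Prod.mk.injEq] <;> norm_num
  · -- α = -2 : use transpose symmetry
    subst hα
    have hpt := lemT (-2) p q hp
    have hp0t : -p.transpose ^ 2 + 2 * (p.transpose * q.transpose) + p.transpose = 0 := by
      have h0 : (-2 - (-2) : ℂ) = 0 := by norm_num
      rw [h0, zero_smul, add_zero] at hpt
      exact hpt
    have hqt := lemT β q p hq
    rcases keyB (-2-β) p.transpose q.transpose hp0t hqt (trans_ne p q hnc) with h | h | h | h
    · have : β = -2 := by linear_combination -h
      subst this; simp only [Set.mem_insert_iff, Set.mem_singleton_iff, Prod.mk.injEq] <;> norm_num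
    · have : β = -1 := by linear_combination -h
      subst this; simp only [Set.mem_insert_iff, Set.mem_singleton_iff, Prod.mk.injEq] <;> norm_num
    · have : β = 0 := by linear_combination -h
      subst this; simp only [Set.mem_insert_iff, Set.mem_singleton_iff, Prod.mk.injEq] <;> norm_num
    · have : β = 1 := by linear_combination -h
      subst this; simp only [Set.mem_insert_iff, Set.mem_singleton_iff, Prod.mk.injEq] <;> norm_num
  · -- β = 0 : swap roles of p and q
    subst hβ
    have hq0 : -q ^ 2 + 2 * (q * p) + q = 0 := by
      simpa using hq
    rcases keyB α q p hq0 hp hnc' with h | h | h | h <;> subst h <;>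
      simp only [Set.mem_insert_iff, Set.mem_singleton_iff, Prod.mk.injEq] <;> norm_num
  · -- β = -2 : swap and transpose
    subst hβ
    have hqt := lemT (-2) q p hq
    have hq0t : -q.transpose ^ 2 + 2 * (q.transpose * p.transpose) + q.transpose = 0 := by
      have h0 : (-2 - (-2) : ℂ) = 0 := by norm_num
      rw [h0, zero_smul, add_zero] at hqt
      exact hqt
    have hpt := lemT α p q hp
    rcases keyB (-2-α) q.transpose p.transpose hq0t hpt (trans_ne q p hnc') with h | h | h | h
    · have : α = -2 := by linear_combination -h
      subst this; simp only [Set.mem_insert_iff, Set.mem_singleton_iff, Prod.mk.injEq] <;> norm_num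
    · have : α = -1 := by linear_combination -h
      subst this; simp only [Set.mem_insert_iff, Set.mem_singleton_iff, Prod.mk.injEq] <;> norm_num
    · have : α = 0 := by linear_combination -h
      subst this; simp only [Set.mem_insert_iff, Set.mem_singleton_iff, Prod.mk.injEq] <;> norm_num
    · have : α = 1 := by linear_combination -h
      subst this; simp only [Set.mem_insert_iff, Set.mem_singleton_iff, Prod.mk.injEq] <;> norm_num
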